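/- Let G be a graph, A ⊆ V(G), and u a vertex not in A. If there are k internally disjoint u–A paths with distinct endpoints in A (a u–A fan of size k), and (G, K') is obtained from (G, K) by adding to the clique K a vertex w adjacent to all of K with A = V(K') and k < |V(K')|, and at most one of the paths ends in w, then there is a u–V(K) fan of size k in G. -/

import Mathlib

open SimpleGraph

/-- `G` has a `u`–`A` fan of size `k`: `k` internally disjoint `u`–`A` paths with
pairwise distinct endpoints in `A`, whose internal vertices avoid `A`. -/
def HasFan {V : Type*} (G : SimpleGraph V) (u : V) (A : Set V) (k : ℕ) : Prop :=
  ∃ (e : Fin k → V) (p : ∀ i, G.Walk u (e i)),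
    Function.Injective e ∧ (∀ i, e i ∈ A) ∧ (∀ i, (p i).IsPath) ∧
    (∀ i, ∀ x ∈ (p i).support, x ≠ u → x ≠ e i → x ∉ A) ∧
    (∀ i j, i ≠ j → ∀ x, x ∈ (p i).support → x ∈ (p j).support → x = u)

lemma isPath_concat' {V : Type*} {G : SimpleGraph V} {u v x : V} {p : G.Walk u v}
    (hp : p.IsPath) (h : G.Adj v x) (hx : x ∉ p.support) : (p.concat h).IsPath := by
  rw [Walk.isPath_def, Walk.support_concat]
  simp [List.nodup_append, hp.support_nodup, hx]
  exact fun a ha hax => hx (hax ▸ ha)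

/-- If `K` is a clique, `w ∉ K` is adjacent to all of `K`, `u ∉ K ∪ {w}`, and there is a
`u`–`(K ∪ {w})` fan of size `k < |K ∪ {w}|` in which at most one path ends in `w`, then
`G` has a `u`–`K` fan of size `k`. -/
theorem stmt15 {V : Type*} (G : SimpleGraph V) (K : Set V) (hK : G.IsClique K)
    (w : V) (hw : w ∉ K) (hwadj : ∀ x ∈ K, G.Adj w x)
    (u : V) (hu : u ∉ K ∪ {w}) (k : ℕ) (hk : k < (K ∪ {w} : Set V).ncard)
    (e : Fin k → V) (p : ∀ i, G.Walk u (e i))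
    (he : Function.Injective e) (heA : ∀ i, e i ∈ K ∪ {w})
    (hp : ∀ i, (p i).IsPath)
    (hint : ∀ i, ∀ x ∈ (p i).support, x ≠ u → x ≠ e i → x ∉ K ∪ {w})
    (hdisj : ∀ i j, i ≠ j → ∀ x, x ∈ (p i).support → x ∈ (p j).support → x = u)
    (hone : {i | e i = w}.Subsingleton) :
    HasFan G u K k := by
  classical
  by_cases hex : ∃ i0, e i0 = w
  case neg =>
    refine ⟨e, p, he, ?_, hp, ?_, hdisj⟩
    · intro i
      rcases heA i with h | h
      · exact h
      · exact absurd ⟨i, h⟩ hex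
    · intro i x hx hxu hxe hxK
      exact hint i x hx hxu hxe (Or.inl hxK)
  case pos =>
    obtain ⟨i0, hi0⟩ := hex
    -- find x ∈ K not in range e
    have hfin : (K ∪ {w} : Set V).Finite := by
      by_contra h
      rw [Set.Infinite.ncard h] at hk; omega
    have hsub : ¬ (K ∪ {w} : Set V) ⊆ Set.range e := by
      intro hs
      have : (K ∪ {w} : Set V).ncard ≤ (Set.range e).ncard :=
        Set.ncard_le_ncard hs (Set.finite_range e)
      have h2 : (Set.range e).ncard ≤ k := by
        have := Set.ncard_image_le (f := e) (s := (Set.univ : Set (Fin k)))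
          Set.finite_univ
        simpa [Set.image_univ, Set.ncard_univ] using this
      omega
    obtain ⟨x, hxA, hxr⟩ := Set.not_subset.mp hsub
    have hxK : x ∈ K := by
      rcases hxA with h | h
      · exact h
      · exact absurd (h ▸ ⟨i0, hi0⟩ : ∃ i, e i = x) hxr
    have hxadj : G.Adj w x := hwadj x hxK
    have hxu : x ≠ u := by rintro rfl; exact hu (Or.inl hxK)
    have hxw : x ≠ w := by rintro rfl; exact hw hxK
    set e' : Fin k → V := fun i => if e i = w then x else e i with he'def
    have he'val : ∀ i, e i = w → e' i = x := by intro i h; simp [he'def, h]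
    have he'val' : ∀ i, e i ≠ w → e' i = e i := by intro i h; simp [he'def, h]
    have hxsupp : ∀ i, x ∉ (p i).support := by
      intro i hxs
      have := hint i x hxs hxu ?_ (Or.inl hxK)
      · exact this
      · intro h; exact hxr ⟨i, h.symm⟩
    refine ⟨e', fun i => if h : e i = w then
        ((((p i).copy rfl h).concat hxadj).copy rfl (he'val i h).symm)
      else ((p i).copy rfl (he'val' i h).symm), ?_, ?_, ?_, ?_, ?_⟩
    · -- injective
      intro i j hij
      by_cases hi : e i = w <;> by_cases hj : e j = w
      · exact hone hi hj
      · rw [he'val i hi, he'val' j hj] at hij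
        exact absurd ⟨j, hij.symm⟩ hxr
      · rw [he'val' i hi, he'val j hj] at hij
        exact absurd ⟨i, hij⟩ hxr
      · rw [he'val' i hi, he'val' j hj] at hij
        exact he hij
    · -- endpoints in K
      intro i
      by_cases hi : e i = w
      · rw [he'val i hi]; exact hxK
      · rw [he'val' i hi]
        rcases heA i with h | h
        · exact h
        · exact absurd h hi
    · -- paths
      intro i
      by_cases hi : e i = w <;> simp only [hi, dif_pos, dif_neg, not_false_iff]
      · rw [Walk.isPath_copy]
        refine isPath_concat' ?_ _ ?_
        · rw [Walk.isPath_copy]; exact hp i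
        · rw [Walk.support_copy]; exact hxsupp i
      · simp [Walk.isPath_copy, hp i]
    · -- internal avoid K
      intro i y hy hyu hye hyK
      by_cases hi : e i = w
      · simp only [hi, dif_pos] at hy
        rw [Walk.support_copy, Walk.support_concat, Walk.support_copy] at hy
        rw [List.mem_append] at hy
        rcases hy with hy' | hy'
        · by_cases hyw : y = w
          · exact hw (hyw ▸ hyK)
          · exact hint i y hy' hyu (hi ▸ hyw) (Or.inl hyK)
        · rw [List.mem_singleton] at hy'
          exact hye (hy'.trans (he'val i hi).symm)
      · simp only [hi, dif_neg, not_false_iff] at hy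
        rw [Walk.support_copy] at hy
        exact hint i y hy hyu (fun h => hye (h.trans (he'val' i hi).symm)) (Or.inl hyK)
    · -- disjointness
      intro i j hij y hyi hyj
      have hmem : ∀ l, y ∈ (if h : e l = w then
          ((((p l).copy rfl h).concat hxadj).copy rfl (he'val l h).symm)
        else ((p l).copy rfl (he'val' l h).symm)).support →
          y ∈ (p l).support ∨ y = x := by
        intro l hl
        by_cases hlw : e l = w
        · simp only [hlw, dif_pos] at hl
          rw [Walk.support_copy, Walk.support_concat, Walk.support_copy] at hl
          rw [List.mem_append] at hl
          rcases hl with h | h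
          · exact Or.inl h
          · exact Or.inr (List.mem_singleton.mp h)
        · simp only [hlw, dif_neg, not_false_iff] at hl
          rw [Walk.support_copy] at hl
          exact Or.inl hl
      rcases hmem i hyi with h1 | rfl
      · rcases hmem j hyj with h2 | rfl
        · exact hdisj i j hij y h1 h2
        · exact absurd h1 (hxsupp i)
      · rcases hmem j hyj with h2 | h2
        · exact absurd h2 (hxsupp j)
        · -- y = x in both means both i and j were the w-path, contradiction with hij
          by_cases hi : e i = w
          · by_cases hj : e j = w
            · exact absurd (hone hi hj) hij
            · -- j not w-path: x ∈ support handled above? here y = x came from mem of j's path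
              -- but if e j ≠ w, j's walk support = (p j).support, so x ∈ (p j).support
              simp only [hj, dif_neg, not_false_iff] at hyj
              rw [Walk.support_copy] at hyj
              exact absurd hyj (hxsupp j)
          · simp only [hi, dif_neg, not_false_iff] at hyi
            rw [Walk.support_copy] at hyi
            exact absurd hyi (hxsupp i)
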